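/- There exists a constant C > 0 such that for all j ∈ {0,1,2} and all n ∈ ℤ+β_j: |d_j(n)| ≤ C·√|n|. -/

import Mathlib

open scoped BigOperators
open Finset Filter MeasureTheory
open scoped Classical

noncomputable section

namespace Paper

/-- The quadratic form `Q(v) = 12 v₁² − 2 v₂²` on `ℝ²`. -/
def Qf (v : ℝ × ℝ) : ℝ := 12 * v.1 ^ 2 - 2 * v.2 ^ 2

/-- The quadratic form on `ℚ²`. -/
def Qq (μ : ℚ × ℚ) : ℚ := 12 * μ.1 ^ 2 - 2 * μ.2 ^ 2

def betaR : ℕ → ℝ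
  | 0 => 1 / 48
  | 1 => 25 / 48
  | _ => 23 / 24

def betaQ : ℕ → ℚ
  | 0 => 1 / 48
  | 1 => 25 / 48
  | _ => 23 / 24

def DeltaR : ℕ → ℝ
  | 0 => -1 / 48
  | 1 => 23 / 48
  | _ => 11 / 12

def Splus : ℕ → Finset (ℚ × ℚ)
  | 0 => {(7/24, 0), (17/24, 0), (11/24, 1/2), (13/24, 1/2)}
  | 1 => {(11/24, 0), (13/24, 0), (7/24, 1/2), (17/24, 1/2)}
  | _ => {(5/12, 1/4), (7/12, 1/4), (5/12, 3/4), (7/12, 3/4)}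

def Sminus : ℕ → Finset (ℚ × ℚ)
  | 0 => {(1/24, 0), (23/24, 0), (5/24, 1/2), (19/24, 1/2)}
  | 1 => {(5/24, 0), (19/24, 0), (1/24, 1/2), (23/24, 1/2)}
  | _ => {(1/12, 1/4), (11/12, 1/4), (1/12, 3/4), (11/12, 3/4)}

/-- The Fourier coefficients `a_μ(n)` of the false-indefinite theta function:
for `n > 0` the sum of `(1/2)(1 + sgn(2v₁+v₂)sgn(2v₁−v₂))` over `v ∈ ℤ²+μ` with `Q(v)=n`;
for `n < 0` the sum of `(1/2)(1 − sgn(3v₁+v₂)sgn(3v₁−v₂))` over such `v`. -/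
def aCoef (μ : ℚ × ℚ) (n : ℚ) : ℝ :=
  if 0 < n then
    (1 / 2) * ∑' v : ℤ × ℤ,
      (if Qf ((v.1 : ℝ) + (μ.1 : ℝ), (v.2 : ℝ) + (μ.2 : ℝ)) = (n : ℝ) then
        1 + Real.sign (2 * ((v.1 : ℝ) + (μ.1 : ℝ)) + ((v.2 : ℝ) + (μ.2 : ℝ))) *
            Real.sign (2 * ((v.1 : ℝ) + (μ.1 : ℝ)) - ((v.2 : ℝ) + (μ.2 : ℝ)))
      else 0)
  else
    (1 / 2) * ∑' v : ℤ × ℤ,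
      (if Qf ((v.1 : ℝ) + (μ.1 : ℝ), (v.2 : ℝ) + (μ.2 : ℝ)) = (n : ℝ) then
        1 - Real.sign (3 * ((v.1 : ℝ) + (μ.1 : ℝ)) + ((v.2 : ℝ) + (μ.2 : ℝ))) *
            Real.sign (3 * ((v.1 : ℝ) + (μ.1 : ℝ)) - ((v.2 : ℝ) + (μ.2 : ℝ)))
      else 0)

/-- The Fourier coefficients `d_j(n)`, meaningful for `n ∈ ℤ + β_j`. -/
def dCoef (j : ℕ) (n : ℚ) : ℝ :=
  (1 / 2) * ((∑ μ ∈ Splus j, aCoef μ n) - ∑ μ ∈ Sminus j, aCoef μ n)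

/-- `d_j(m + β_j)` as a function of `m : ℤ`. -/
def dInt (j : ℕ) (m : ℤ) : ℝ := dCoef j ((m : ℚ) + betaQ j)

/-- Partial sums `∑_{n ∈ ℤ+β, |n| ≤ X} f(n)` of a function on the coset `ℤ + β`,
encoded by `g : ℤ → ℂ`, `g m = f (m + β)`. -/
def symPartial (β : ℝ) (g : ℤ → ℂ) (X : ℝ) : ℂ :=
  ∑ m ∈ Finset.Icc ⌈-X - β⌉ ⌊X - β⌋, g m

/-- Convergence of the symmetric sum `Σ*_{n∈ℤ+β} f(n)` to `L`. -/
def HasSymSum (β : ℝ) (g : ℤ → ℂ) (L : ℂ) : Prop :=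
  Tendsto (symPartial β g) atTop (nhds L)

/-- The value of the symmetric sum (junk when it does not converge). -/
def symLim (β : ℝ) (g : ℤ → ℂ) : ℂ :=
  limUnder atTop (symPartial β g)

/-- The partition function `p(m)`. -/
def pFun (m : ℕ) : ℕ := Fintype.card (Nat.Partition m)

/-- The coefficients `α_j(n) = Σ_{m=0}^n p(m) d_j(n − m + β_j)`. -/
def alphaC (j : ℕ) (n : ℕ) : ℝ :=
  ∑ m ∈ Finset.range (n + 1), (pFun m : ℝ) * dCoef j ((n : ℚ) - (m : ℚ) + betaQ j)

/-- The `K`-Bessel function `K_ν(x) = ∫₀^∞ e^{−x cosh u} cosh(νu) du`. -/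
def besselK (ν x : ℝ) : ℝ :=
  ∫ u in Set.Ioi (0 : ℝ), Real.exp (-x * Real.cosh u) * Real.cosh (ν * u)

/-- `I_{1/2}(x) = √(2/(πx)) sinh x`. -/
def besselIhalf (x : ℝ) : ℝ := Real.sqrt (2 / (Real.pi * x)) * Real.sinh x

/-- `𝒦(x) = x K₁(x)`. -/
def KKfun (x : ℝ) : ℝ := x * besselK 1 x

/-- The Maass form `U_j(τ) = √τ₂ Σ_{n∈ℤ+β_j} d_j(n) K₀(2π|n|τ₂) e^{2πinτ₁}`. -/
def Ufun (j : ℕ) (τ : ℂ) : ℂ :=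
  (Real.sqrt τ.im : ℂ) * ∑' m : ℤ,
    ((dInt j m : ℝ) : ℂ) * ((besselK 0 (2 * Real.pi * |(m : ℝ) + betaR j| * τ.im) : ℝ) : ℂ) *
      Complex.exp (2 * Real.pi * Complex.I * (((m : ℝ) + betaR j : ℝ) : ℂ) * (τ.re : ℂ))

def t1c : ℝ := Real.log (Real.sqrt 3 - Real.sqrt 2)
def t2c : ℝ := Real.log (Real.sqrt 3 + Real.sqrt 2)

/-- Summand of the completed theta function `Θ̂_μ`. -/
def thetaTerm (μ : ℚ × ℚ) (τ : ℂ) (v : ℤ × ℤ) : ℂ :=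
  Complex.exp (2 * Real.pi * Complex.I *
      ((Qf ((v.1 : ℝ) + (μ.1 : ℝ), (v.2 : ℝ) + (μ.2 : ℝ)) : ℝ) : ℂ) * τ) *
    (((∫ t in t1c..t2c, Real.exp (-Real.pi *
        (4 * Real.sqrt 3 * ((v.1 : ℝ) + (μ.1 : ℝ)) * Real.sinh t -
         2 * Real.sqrt 2 * ((v.2 : ℝ) + (μ.2 : ℝ)) * Real.cosh t) ^ 2 * τ.im)) : ℝ) : ℂ)

/-- The modular completion `Û_j`. -/
def UhatFun (j : ℕ) (τ : ℂ) : ℂ :=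
  ((Real.sqrt τ.im / 2 : ℝ) : ℂ) *
    ((∑ μ ∈ Splus j, ∑' v : ℤ × ℤ, thetaTerm μ τ v) -
     ∑ μ ∈ Sminus j, ∑' v : ℤ × ℤ, thetaTerm μ τ v)

/-- The bilinear form `B(v,w) = 24v₁w₁ − 4v₂w₂`. -/
def Bform (v w : ℝ × ℝ) : ℝ := 24 * v.1 * w.1 - 4 * v.2 * w.2

def nuRef : ℕ → ℚ × ℚ
  | 0 => (7/24, 0)
  | 1 => (11/24, 0)
  | _ => (5/12, 1/4)

/-- The theta multiplier `ψ_{M,Q}(μ,ν)` for `M = [[a,b],[c,d]]`, `c > 0`. -/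
def psiMQ (a d : ℤ) (c : ℕ) (μ ν : ℚ × ℚ) : ℂ :=
  ((1 / (4 * Real.sqrt 6 * c) : ℝ) : ℂ) *
    ∑ m ∈ Finset.range c ×ˢ Finset.range c,
      Complex.exp (2 * Real.pi * Complex.I / (c : ℂ) *
        ((a : ℂ) * ((Qf ((m.1 : ℝ) + (μ.1 : ℝ), (m.2 : ℝ) + (μ.2 : ℝ)) : ℝ) : ℂ) -
         ((Bform ((m.1 : ℝ) + (μ.1 : ℝ), (m.2 : ℝ) + (μ.2 : ℝ)) ((ν.1 : ℝ), (ν.2 : ℝ)) : ℝ) : ℂ) +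
         (d : ℂ) * ((Qf ((ν.1 : ℝ), (ν.2 : ℝ)) : ℝ) : ℂ)))

/-- The multiplier `Ψ_M(j,ℓ)`. -/
def PsiM (a d : ℤ) (c : ℕ) (j l : ℕ) : ℂ :=
  (∑ μ ∈ Splus j, psiMQ a d c μ (nuRef l)) - ∑ μ ∈ Sminus j, psiMQ a d c μ (nuRef l)

/-- The matrix `Ψ_S = (1/2)[[1,1,√2],[1,1,−√2],[√2,−√2,0]]`. -/
def PsiS (j l : ℕ) : ℂ :=
  match j, l with
  | 0, 0 => 1 / 2
  | 0, 1 => 1 / 2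
  | 0, _ => ((Real.sqrt 2 : ℝ) : ℂ) / 2
  | 1, 0 => 1 / 2
  | 1, 1 => 1 / 2
  | 1, _ => -(((Real.sqrt 2 : ℝ) : ℂ) / 2)
  | _, 0 => ((Real.sqrt 2 : ℝ) : ℂ) / 2
  | _, 1 => -(((Real.sqrt 2 : ℝ) : ℂ) / 2)
  | _, _ => 0

/-- `h′`: the inverse of `−h` modulo `k`, taken in `{0,…,k−1}`. -/
def hprime (h k : ℕ) : ℕ := ZMod.val (-(h : ZMod k))⁻¹

/-- The Dedekind sum `s(h,k)`. -/
def dedekindS (h k : ℕ) : ℝ :=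
  ∑ r ∈ Finset.Ico 1 k,
    ((r : ℝ) / k) * (((h : ℝ) * r) / k - ⌊((h : ℝ) * r) / k⌋ - 1 / 2)

/-- The eta multiplier `ν_η(M_{h,k})`. -/
def nuEta (h k : ℕ) : ℂ :=
  Complex.exp (Real.pi * Complex.I *
    (((((h : ℝ) - (hprime h k : ℝ)) / (12 * k) - 1 / 4 + dedekindS (hprime h k) k : ℝ)) : ℂ))

/-- The multiplier `ψ_{h,k}(j,ℓ) = e^{−πi/4} Ψ_{M_{h,k}}(j,ℓ)/ν_η(M_{h,k})`, where
`M_{h,k}` has upper-left entry `h`, lower-left entry `k` and lower-right entry `−h′`. -/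
def psiHK (h k j l : ℕ) : ℂ :=
  Complex.exp (-Real.pi * Complex.I / 4) * PsiM (h : ℤ) (-(hprime h k : ℤ)) k j l / nuEta h k

/-- Summand of the integral kernel `Φ_{ℓ,x}(t)`. -/
def PhiTerm (l : ℕ) (x t : ℝ) (m : ℤ) : ℂ :=
  ((dInt l m : ℝ) : ℂ) *
    Complex.exp (2 * Real.pi * Complex.I * (x : ℂ) * (((m : ℝ) + betaR l : ℝ) : ℂ)) /
    ((t : ℂ) - (((m : ℝ) + betaR l : ℝ) : ℂ))

/-- The integral kernel `Φ_{ℓ,x}(t) = Σ*_{m∈ℤ+β_ℓ} d_ℓ(m) e^{2πixm}/(t−m)`. -/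
def PhiKer (l : ℕ) (x t : ℝ) : ℂ := symLim (betaR l) (PhiTerm l x t)

/-- Approximants of the principal value integral over `[0,1/24]` with pole at `1/48`. -/
def pv124Partial (F : ℝ → ℂ) (ε : ℝ) : ℂ :=
  (∫ t in (0 : ℝ)..(1 / 48 - ε), F t) + ∫ t in (1 / 48 + ε : ℝ)..(1 / 24 : ℝ), F t

def HasPV124 (F : ℝ → ℂ) (L : ℂ) : Prop :=
  Tendsto (pv124Partial F) (nhdsWithin 0 (Set.Ioi 0)) (nhds L)

def pv124 (F : ℝ → ℂ) : ℂ := limUnder (nhdsWithin 0 (Set.Ioi 0)) (pv124Partial F)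

/-- Approximants of `PV ∫_a^∞ F`, pole at `n`. -/
def pvFromPartial (a : ℝ) (F : ℝ → ℂ) (n : ℝ) (ε : ℝ) : ℂ :=
  (∫ t in a..(n - ε), F t) + ∫ t in Set.Ioi (n + ε), F t

/-- `PV ∫_a^∞ F dt` where `F` has (at most) a pole at `n`; an ordinary improper
integral when `n ≤ a`. -/
def pvFrom (a : ℝ) (F : ℝ → ℂ) (n : ℝ) : ℂ :=
  if a < n then limUnder (nhdsWithin 0 (Set.Ioi 0)) (pvFromPartial a F n)
  else ∫ t in Set.Ioi a, F t

def HasPvFrom (a : ℝ) (F : ℝ → ℂ) (n : ℝ) (L : ℂ) : Prop :=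
  if a < n then Tendsto (pvFromPartial a F n) (nhdsWithin 0 (Set.Ioi 0)) (nhds L)
  else (IntegrableOn F (Set.Ioi a) ∧ ∫ t in Set.Ioi a, F t = L)

/-- The Wirtinger derivative `U_j′(z) = (1/2)(∂_{z₁} − i ∂_{z₂}) U_j (z)`. -/
def UfunDeriv (j : ℕ) (z : ℂ) : ℂ :=
  (1 / 2) * (deriv (fun x : ℝ => Ufun j (⟨x, z.im⟩ : ℂ)) z.re -
    Complex.I * deriv (fun y : ℝ => Ufun j (⟨z.re, y⟩ : ℂ)) z.im)

/-- Integrand of the obstruction to modularity `𝒰_{j,ρ}(τ)`. -/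
def obstructionIntegrand (j : ℕ) (ρ : ℝ) (τ : ℂ) (t : ℝ) : ℂ :=
  (4 * Complex.I * (t : ℂ) * UfunDeriv j ((ρ : ℂ) + (t : ℂ) * Complex.I) -
      (((t : ℂ) + Complex.I * (τ - (ρ : ℂ))) / ((t : ℂ) - Complex.I * (τ - (ρ : ℂ)))) *
        Ufun j ((ρ : ℂ) + (t : ℂ) * Complex.I)) /
    (((Real.sqrt t : ℝ) : ℂ) * (((t : ℂ) ^ 2 + (τ - (ρ : ℂ)) ^ 2) ^ ((1 : ℂ) / 2)))

/-- The obstruction to modularity `𝒰_{j,ρ}(τ)`. -/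
def obstruction (j : ℕ) (ρ : ℝ) (τ : ℂ) : ℂ :=
  ((1 / (2 * Real.pi) : ℝ) : ℂ) * ∫ t in Set.Ioi (0 : ℝ), obstructionIntegrand j ρ τ t

/-- `𝒦_{τ,d/c}(n)` expressed with `w = τ + d/c`. -/
def KKtau (w : ℂ) (n : ℝ) : ℂ :=
  ∫ t in Set.Ioi (0 : ℝ),
    (t : ℂ) * (Complex.I * w * ((besselK 0 (2 * Real.pi * |n| * t) : ℝ) : ℂ) -
        ((Real.sign n : ℝ) : ℂ) * (t : ℂ) * ((besselK 1 (2 * Real.pi * |n| * t) : ℝ) : ℂ)) /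
      (((t : ℂ) ^ 2 + w ^ 2) ^ ((3 : ℂ) / 2))

/-- The sine integral `Si(w) = ∫₀^w sin t / t dt`, along the segment `[0,w]`. -/
def SiFun (w : ℂ) : ℂ := ∫ s in (0 : ℝ)..1, w * Complex.sin ((s : ℂ) * w) / ((s : ℂ) * w)

/-- The cosine integral `Ci(w) = γ + Log w + ∫₀^w (cos t − 1)/t dt` on `ℂ∖(−∞,0]`. -/
def CiFun (w : ℂ) : ℂ :=
  ((Real.eulerMascheroniConstant : ℝ) : ℂ) + Complex.log w +
    ∫ s in (0 : ℝ)..1, w * (Complex.cos ((s : ℂ) * w) - 1) / ((s : ℂ) * w)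

def fTrig (w : ℂ) : ℂ :=
  CiFun w * Complex.sin w + Complex.cos w * (((Real.pi / 2 : ℝ) : ℂ) - SiFun w)

def gTrig (w : ℂ) : ℂ :=
  -CiFun w * Complex.cos w + Complex.sin w * (((Real.pi / 2 : ℝ) : ℂ) - SiFun w)

/-- The holomorphic q-series `u_j(τ) = Σ_{n∈ℤ+β_j, n>0} d_j(n) e^{2πinτ}`. -/
def ufun (j : ℕ) (τ : ℂ) : ℂ :=
  ∑' m : ℕ, ((dInt j (m : ℤ) : ℝ) : ℂ) *
    Complex.exp (2 * Real.pi * Complex.I * (((m : ℝ) + betaR j : ℝ) : ℂ) * τ)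

/-- `𝒜 = log(√2+√3)/√6`. -/
def AAconst : ℝ := Real.log (Real.sqrt 2 + Real.sqrt 3) / Real.sqrt 6

/-- `a_{c,μ,r}(n)`: coefficients of the rescaled lattice `ℤ² + (μ+r)/c` with the
rescaled quadratic form `c²Q`. -/
def aShift (c : ℕ) (r : ℕ × ℕ) (μ : ℚ × ℚ) (n : ℚ) : ℝ :=
  if 0 < n then
    (1 / 2) * ∑' v : ℤ × ℤ,
      (if (c : ℝ) ^ 2 * Qf ((v.1 : ℝ) + (((μ.1 + r.1) / c : ℚ) : ℝ),
            (v.2 : ℝ) + (((μ.2 + r.2) / c : ℚ) : ℝ)) = (n : ℝ) then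
        1 + Real.sign (2 * ((v.1 : ℝ) + (((μ.1 + r.1) / c : ℚ) : ℝ)) +
              ((v.2 : ℝ) + (((μ.2 + r.2) / c : ℚ) : ℝ))) *
            Real.sign (2 * ((v.1 : ℝ) + (((μ.1 + r.1) / c : ℚ) : ℝ)) -
              ((v.2 : ℝ) + (((μ.2 + r.2) / c : ℚ) : ℝ)))
      else 0)
  else
    (1 / 2) * ∑' v : ℤ × ℤ,
      (if (c : ℝ) ^ 2 * Qf ((v.1 : ℝ) + (((μ.1 + r.1) / c : ℚ) : ℝ),
            (v.2 : ℝ) + (((μ.2 + r.2) / c : ℚ) : ℝ)) = (n : ℝ) then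
        1 - Real.sign (3 * ((v.1 : ℝ) + (((μ.1 + r.1) / c : ℚ) : ℝ)) +
              ((v.2 : ℝ) + (((μ.2 + r.2) / c : ℚ) : ℝ))) *
            Real.sign (3 * ((v.1 : ℝ) + (((μ.1 + r.1) / c : ℚ) : ℝ)) -
              ((v.2 : ℝ) + (((μ.2 + r.2) / c : ℚ) : ℝ)))
      else 0)

/-- `Σ_{n∈ℤ+Q(μ), 0<n≤X} a_{c,μ,r}(n)`. -/
def aShiftSumPos (c : ℕ) (r : ℕ × ℕ) (μ : ℚ × ℚ) (X : ℝ) : ℝ :=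
  ∑ m ∈ Finset.Icc (⌊-((Qq μ : ℝ))⌋ + 1) ⌊X - ((Qq μ : ℝ))⌋, aShift c r μ ((m : ℚ) + Qq μ)

/-- `Σ_{n∈ℤ+Q(μ), −X≤n<0} a_{c,μ,r}(n)`. -/
def aShiftSumNeg (c : ℕ) (r : ℕ × ℕ) (μ : ℚ × ℚ) (X : ℝ) : ℝ :=
  ∑ m ∈ Finset.Icc ⌈-X - ((Qq μ : ℝ))⌉ (⌈-((Qq μ : ℝ))⌉ - 1), aShift c r μ ((m : ℚ) + Qq μ)

/-- `#{(r₁,r₂) ∈ {0,…,c−1}² : Q(μ+(r₁,r₂)) − (r+β_j) ∈ cℤ}`. -/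
def countCong (j : ℕ) (r c : ℕ) (μ : ℚ × ℚ) : ℕ :=
  ((Finset.range c ×ˢ Finset.range c).filter (fun p =>
    ((Qq (μ.1 + (p.1 : ℚ), μ.2 + (p.2 : ℚ)) - ((r : ℚ) + betaQ j)) / (c : ℚ)).den = 1)).card

/-- The density `𝒜_{j,r,c}`. -/
def AAjrc (j : ℕ) (r c : ℕ) : ℝ :=
  (AAconst / (2 * (c : ℝ) ^ 2)) *
    ((∑ μ ∈ Splus j, (countCong j r c μ : ℝ)) - ∑ μ ∈ Sminus j, (countCong j r c μ : ℝ))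

/-- `Σ_{n∈ℤ+β_j, 0<n≤X, n ≡ r+β_j (mod c)} d_j(n)`. -/
def dSumPos (j : ℕ) (r c : ℕ) (X : ℝ) : ℝ :=
  ∑ m ∈ (Finset.Icc (⌊-(betaR j)⌋ + 1) ⌊X - betaR j⌋).filter
      (fun m => (c : ℤ) ∣ (m - (r : ℤ))), dInt j m

/-- `Σ_{n∈ℤ+β_j, −X≤n<0, n ≡ r+β_j (mod c)} d_j(n)`. -/
def dSumNeg (j : ℕ) (r c : ℕ) (X : ℝ) : ℝ :=
  ∑ m ∈ (Finset.Icc ⌈-X - betaR j⌉ (⌈-(betaR j)⌉ - 1)).filter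
      (fun m => (c : ℤ) ∣ (m - (r : ℤ))), dInt j m


/-- The exponential factor `e^{−2πidn/c}` at `n = m + β`. -/
def eTerm (c : ℕ) (d : ℤ) (β : ℝ) (m : ℤ) : ℂ :=
  Complex.exp (-(2 * Real.pi * Complex.I) * (d : ℂ) * (((m : ℝ) + β : ℝ) : ℂ) / (c : ℂ))

/-- Summand `d_j(n) e^{−2πidn/c} / n` of the symmetric sum. -/
def symTerm7 (j : ℕ) (c : ℕ) (d : ℤ) (m : ℤ) : ℂ :=
  ((dInt j m : ℝ) : ℂ) * eTerm c d (betaR j) m / ((((m : ℝ) + betaR j : ℝ)) : ℂ)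

/-- Summand of the series in Lemma 4.1 (inner series of the Mordell-type integral). -/
def mordellTerm6 (j : ℕ) (c : ℕ) (d : ℤ) (τ : ℂ) (t : ℝ) (m : ℤ) : ℂ :=
  ((dInt j m : ℝ) : ℂ) * eTerm c d (betaR j) m *
    ((t : ℂ) * ((besselK 0 (2 * Real.pi * |(m : ℝ) + betaR j| * t) : ℝ) : ℂ) /
      (((t : ℂ) ^ 2 + (τ + (((d : ℝ) / (c : ℝ) : ℝ) : ℂ)) ^ 2) ^ ((1 : ℂ) / 2))) *
    (2 * Real.pi * (((m : ℝ) + betaR j : ℝ) : ℂ) +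
      Complex.I * (τ + (((d : ℝ) / (c : ℝ) : ℝ) : ℂ)) /
        ((t : ℂ) ^ 2 + (τ + (((d : ℝ) / (c : ℝ) : ℝ) : ℂ)) ^ 2))

/-- Summand `d_j(n) e^{−2πidn/c} 𝒦_{τ,d/c}(n)`. -/
def KKterm10 (j : ℕ) (c : ℕ) (d : ℤ) (τ : ℂ) (m : ℤ) : ℂ :=
  ((dInt j m : ℝ) : ℂ) * eTerm c d (betaR j) m *
    KKtau (τ + (((d : ℝ) / (c : ℝ) : ℝ) : ℂ)) ((m : ℝ) + betaR j)

/-- `PV ∫₀^∞ e^{2πiwt}/(t−n) dt`. -/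
def mordellPV (w : ℂ) (n : ℝ) : ℂ :=
  pvFrom 0 (fun t : ℝ => Complex.exp (2 * Real.pi * Complex.I * w * (t : ℂ)) / ((t : ℂ) - (n : ℂ))) n

/-- Summand of the symmetric sum defining `ℐ_{ℓ,−d/c}(τ)`. -/
def mordellITerm (l : ℕ) (c : ℕ) (d : ℤ) (τ : ℂ) (m : ℤ) : ℂ :=
  ((dInt l m : ℝ) : ℂ) * eTerm c d (betaR l) m *
    mordellPV (τ + (((d : ℝ) / (c : ℝ) : ℝ) : ℂ)) ((m : ℝ) + betaR l)

/-- `ℐ_{ℓ,−d/c}(τ)`. -/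
def mordellI (l : ℕ) (c : ℕ) (d : ℤ) (τ : ℂ) : ℂ :=
  (1 / ((Real.pi : ℂ) * Complex.I)) * symLim (betaR l) (mordellITerm l c d τ)

/-- Summand of the symmetric sum defining `ℐ^e_{ℓ,h′/k,d}(h′/k + iV)`. -/
def IeTerm (l : ℕ) (k : ℕ) (h' : ℤ) (dd : ℝ) (V : ℂ) (m : ℤ) : ℂ :=
  ((dInt l m : ℝ) : ℂ) *
    Complex.exp (2 * Real.pi * Complex.I * (h' : ℂ) * (((m : ℝ) + betaR l : ℝ) : ℂ) / (k : ℂ)) *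
    pvFrom dd (fun t : ℝ => Complex.exp (-(2 * Real.pi) * V * (t : ℂ)) /
        ((t : ℂ) - (((m : ℝ) + betaR l : ℝ) : ℂ))) ((m : ℝ) + betaR l)

/-- The non-principal part `ℐ^e_{ℓ,h′/k,d}(h′/k + iV)`. -/
def Ie (l : ℕ) (k : ℕ) (h' : ℤ) (dd : ℝ) (V : ℂ) : ℂ :=
  (Complex.exp (2 * Real.pi * (dd : ℂ) * V) / ((Real.pi : ℂ) * Complex.I)) *
    symLim (betaR l) (IeTerm l k h' dd V)

/-- The main term of the asymptotic expansion in Lemma 6.1. -/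
def mainExpr15 (j n : ℕ) : ℂ :=
  ((1 / (Real.pi * Real.sqrt (2 * ((n : ℝ) + DeltaR j))) : ℝ) : ℂ) *
    ∑ l ∈ Finset.range 3, PsiS j l *
      ∫ t in (0 : ℝ)..(1 / 96 : ℝ), PhiKer l 0 t *
        ((Real.exp (4 * Real.pi * Real.sqrt (((n : ℝ) + DeltaR j) * (1 / 24 - t))) : ℝ) : ℂ)

/-- `u ↦ (1 − 12u) Φ_{ℓ,0}(u(1−6u))`. -/
def hFun (l : ℕ) (u : ℝ) : ℂ := (((1 - 12 * u : ℝ)) : ℂ) * PhiKer l 0 (u * (1 - 6 * u))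

/-- The expansion coefficients `a_r`. -/
def aExp (j r : ℕ) : ℂ :=
  ((4 * Real.sqrt 3 / (4 * Real.pi * Real.sqrt 6) ^ (r + 2) : ℝ) : ℂ) *
    ∑ l ∈ Finset.range 3, PsiS j l * iteratedDeriv r (hFun l) 0

/-- Integrand of the principal value integral in the main theorem. -/
def intKer0 (j n l k h : ℕ) (t : ℝ) : ℂ :=
  PhiKer l ((hprime h k : ℝ) / k) t *
    ((((1 / 24 - t : ℝ) ^ ((1 : ℝ) / 4)) : ℝ) : ℂ) *
    ((besselIhalf (4 * Real.pi / k * Real.sqrt (((n : ℝ) + DeltaR j) * (1 / 24 - t))) : ℝ) : ℂ)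

/-- The main term of Theorem 1.1. -/
def mainExpr0 (j n : ℕ) : ℂ :=
  ((2 / ((n : ℝ) + DeltaR j) ^ ((1 : ℝ) / 4) : ℝ) : ℂ) *
    ∑ l ∈ Finset.range 3, ∑ k ∈ Finset.Icc 1 (Nat.sqrt n), (1 / (k : ℂ)) *
      ∑ h ∈ (Finset.range k).filter (fun h => Nat.gcd h k = 1),
        psiHK h k j l *
          Complex.exp (-(2 * Real.pi * Complex.I) / (k : ℂ) *
            ((hprime h k : ℂ) / 24 + (((n : ℝ) + DeltaR j : ℝ) : ℂ) * (h : ℂ))) *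
          pv124 (intKer0 j n l k h)


lemma card_pair_le (a b : ℤ) : ({a, b} : Finset ℤ).card ≤ 2 := by
  apply le_trans (Finset.card_insert_le _ _); simp

lemma key (f : ℤ × ℤ → ℝ) (a b N : ℝ) (hN : 0 ≤ N)
    (hbd : ∀ v, |f v| ≤ 2)
    (hsupp : ∀ v : ℤ × ℤ, f v ≠ 0 →
      ((v.1:ℝ)+a)^2 ≤ N ∧ ((v.2:ℝ)+b)^2 ≤ 7*N)
    (huniq : ∀ v w : ℤ × ℤ, f v ≠ 0 → f w ≠ 0 → v.1 = w.1 →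
      ((v.2:ℝ)+b)^2 = ((w.2:ℝ)+b)^2) :
    |∑' v, f v| ≤ 4 * (2*Real.sqrt N + 1) := by
  set I : Finset ℤ := Finset.Icc ⌈-Real.sqrt N - a⌉ ⌊Real.sqrt N - a⌋ with hI
  set J : Finset ℤ := Finset.Icc ⌈-Real.sqrt (7*N) - b⌉ ⌊Real.sqrt (7*N) - b⌋ with hJ
  have hS : ∀ v ∉ I ×ˢ J, f v = 0 := by
    intro v hv
    by_contra hfv
    obtain ⟨h1, h2⟩ := hsupp v hfv
    apply hv
    rw [Finset.mem_product]
    constructor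
    · rw [hI, Finset.mem_Icc]
      have := Real.abs_le_sqrt h1
      rw [abs_le] at this
      constructor
      · rw [Int.ceil_le]; linarith [this.1]
      · rw [Int.le_floor]; linarith [this.2]
    · rw [hJ, Finset.mem_Icc]
      have := Real.abs_le_sqrt h2
      rw [abs_le] at this
      constructor
      · rw [Int.ceil_le]; linarith [this.1]
      · rw [Int.le_floor]; linarith [this.2]
  rw [tsum_eq_sum hS, Finset.sum_product]
  have inner : ∀ x ∈ I, |∑ y ∈ J, f (x, y)| ≤ 4 := by
    intro x _
    set T := J.filter (fun y => f (x, y) ≠ 0) with hT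
    have hsum : ∑ y ∈ J, f (x, y) = ∑ y ∈ T, f (x, y) := by
      rw [hT, Finset.sum_filter_ne_zero]
    rw [hsum]
    have hcard : T.card ≤ 2 := by
      rcases Finset.eq_empty_or_nonempty T with he | ⟨y₀, hy₀⟩
      · simp [he]
      · have hy₀ne : f (x, y₀) ≠ 0 := (Finset.mem_filter.mp hy₀).2
        have hsub : T ⊆ {y₀, ⌊-(y₀:ℝ) - 2*b⌋} := by
          intro y hy
          have hyne : f (x, y) ≠ 0 := (Finset.mem_filter.mp hy).2
          have heq := huniq (x, y) (x, y₀) hyne hy₀ne rfl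
          simp only at heq
          have hfac : ((y:ℝ) - y₀) * ((y:ℝ) + y₀ + 2*b) = 0 := by nlinarith [heq]
          rcases mul_eq_zero.mp hfac with h | h
          · have : (y:ℝ) = (y₀:ℝ) := by linarith
        
            simp [Int.cast_injective this]
          · have : (y:ℝ) = -(y₀:ℝ) - 2*b := by linarith
            have : y = ⌊-(y₀:ℝ) - 2*b⌋ := by
              rw [← this, Int.floor_intCast]
            simp [this]
        calc T.card ≤ _ := Finset.card_le_card hsub
          _ ≤ 2 := card_pair_le _ _
    calc |∑ y ∈ T, f (x, y)| ≤ ∑ y ∈ T, |f (x, y)| := Finset.abs_sum_le_sum_abs _ _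
      _ ≤ ∑ _y ∈ T, 2 := Finset.sum_le_sum (fun y _ => hbd (x, y))
      _ = T.card * 2 := by rw [Finset.sum_const, nsmul_eq_mul]
      _ ≤ 4 := by
          have : (T.card : ℝ) ≤ 2 := by exact_mod_cast hcard
          linarith
  have hcardI : (I.card : ℝ) ≤ 2 * Real.sqrt N + 1 := by
    rw [hI, Int.card_Icc]
    rcases le_or_gt (⌊Real.sqrt N - a⌋ + 1 - ⌈-Real.sqrt N - a⌉) 0 with h | h
    · rw [Int.toNat_of_nonpos h]
      have := Real.sqrt_nonneg N
      norm_num; linarith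
    · have h0 : ((⌊Real.sqrt N - a⌋ + 1 - ⌈-Real.sqrt N - a⌉).toNat : ℝ) =
          ((⌊Real.sqrt N - a⌋ : ℝ) + 1 - (⌈-Real.sqrt N - a⌉ : ℝ)) := by
        rw [← Int.cast_natCast, Int.toNat_of_nonneg h.le]; push_cast; ring
      have h1 := Int.floor_le (Real.sqrt N - a)
      have h2 := Int.le_ceil (-Real.sqrt N - a)
      rw [h0]; linarith
  calc |∑ x ∈ I, ∑ y ∈ J, f (x, y)| ≤ ∑ x ∈ I, |∑ y ∈ J, f (x, y)| :=
        Finset.abs_sum_le_sum_abs _ _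
    _ ≤ ∑ _x ∈ I, 4 := Finset.sum_le_sum inner
    _ = I.card * 4 := by rw [Finset.sum_const, nsmul_eq_mul]
    _ ≤ 4 * (2*Real.sqrt N + 1) := by linarith


lemma sign_abs_le (t : ℝ) : |Real.sign t| ≤ 1 := by
  rcases lt_trichotomy t 0 with h|h|h <;> simp [Real.sign_of_neg, Real.sign_of_pos, h]

lemma abs_one_add_mul_sign (s t : ℝ) : |1 + Real.sign s * Real.sign t| ≤ 2 := by
  have h1 := sign_abs_le s
  have h2 := sign_abs_le t
  have h3 : |Real.sign s * Real.sign t| ≤ 1 := by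
    rw [abs_mul]; exact mul_le_one₀ h1 (abs_nonneg _) h2
  have h4 := abs_le.mp h3
  rw [abs_le]; constructor <;> linarith

lemma abs_one_sub_mul_sign (s t : ℝ) : |1 - Real.sign s * Real.sign t| ≤ 2 := by
  have h1 := sign_abs_le s
  have h2 := sign_abs_le t
  have h3 : |Real.sign s * Real.sign t| ≤ 1 := by
    rw [abs_mul]; exact mul_le_one₀ h1 (abs_nonneg _) h2
  have h4 := abs_le.mp h3
  rw [abs_le]; constructor <;> linarith

lemma aCoef_bound (μ : ℚ × ℚ) (n : ℚ) (hn : n ≠ 0) :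
    |aCoef μ n| ≤ 2 * (2 * Real.sqrt |(n:ℝ)| + 1) := by
  have hNnn : (0:ℝ) ≤ |(n:ℝ)| := abs_nonneg _
  rw [aCoef]
  split_ifs with hpos
  · have hn' : (0:ℝ) < (n:ℝ) := by exact_mod_cast hpos
    have habs : |(n:ℝ)| = (n:ℝ) := abs_of_pos hn'
    have hb := key (fun v : ℤ×ℤ =>
        if Qf ((v.1:ℝ)+(μ.1:ℝ), (v.2:ℝ)+(μ.2:ℝ)) = (n:ℝ) then
          1 + Real.sign (2*((v.1:ℝ)+(μ.1:ℝ)) + ((v.2:ℝ)+(μ.2:ℝ))) *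
              Real.sign (2*((v.1:ℝ)+(μ.1:ℝ)) - ((v.2:ℝ)+(μ.2:ℝ)))
        else 0) (μ.1:ℝ) (μ.2:ℝ) |(n:ℝ)| hNnn ?_ ?_ ?_
    · rw [abs_mul, abs_of_pos (by norm_num : (0:ℝ) < 1/2)]
      linarith
    · intro v
      by_cases h : Qf ((v.1:ℝ)+(μ.1:ℝ), (v.2:ℝ)+(μ.2:ℝ)) = (n:ℝ)
      · simp only [if_pos h]; exact abs_one_add_mul_sign _ _
      · simp [h]
    · intro v hf
      by_cases h : Qf ((v.1:ℝ)+(μ.1:ℝ), (v.2:ℝ)+(μ.2:ℝ)) = (n:ℝ)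
      swap
      · simp [h] at hf
      replace hf : ¬(1 + Real.sign (2*((v.1:ℝ)+(μ.1:ℝ)) + ((v.2:ℝ)+(μ.2:ℝ))) *
          Real.sign (2*((v.1:ℝ)+(μ.1:ℝ)) - ((v.2:ℝ)+(μ.2:ℝ))) = 0) := by
        simpa [h] using hf
      set x' := (v.1:ℝ)+(μ.1:ℝ) with hx'
      set y' := (v.2:ℝ)+(μ.2:ℝ) with hy'
      have hQ : 12 * x'^2 - 2 * y'^2 = (n:ℝ) := h
      have hy4 : y'^2 ≤ 4*x'^2 := by
        by_contra hc
        push_neg at hc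
        have hprod : (2*x'+y') * (2*x'-y') < 0 := by nlinarith
        have hsprod : Real.sign (2*x'+y') * Real.sign (2*x'-y') = -1 := by
          rcases lt_trichotomy (2*x'+y') 0 with h1|h1|h1
          · have h2 : 0 < 2*x'-y' := by nlinarith
            rw [Real.sign_of_neg h1, Real.sign_of_pos h2]; ring
          · rw [h1, zero_mul] at hprod; exact absurd hprod (lt_irrefl 0)
          · have h2 : 2*x'-y' < 0 := by nlinarith
            rw [Real.sign_of_pos h1, Real.sign_of_neg h2]; ring
        rw [hsprod] at hf
        norm_num at hf
      constructor
      · rw [habs]; nlinarith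
      · rw [habs]; nlinarith
    · intro v w hv hw hvw
      by_cases h1 : Qf ((v.1:ℝ)+(μ.1:ℝ), (v.2:ℝ)+(μ.2:ℝ)) = (n:ℝ)
      swap
      · simp [h1] at hv
      by_cases h2 : Qf ((w.1:ℝ)+(μ.1:ℝ), (w.2:ℝ)+(μ.2:ℝ)) = (n:ℝ)
      swap
      · simp [h2] at hw
      have hQ1 : 12 * ((v.1:ℝ)+(μ.1:ℝ))^2 - 2 * ((v.2:ℝ)+(μ.2:ℝ))^2 = (n:ℝ) := h1
      have hQ2 : 12 * ((w.1:ℝ)+(μ.1:ℝ))^2 - 2 * ((w.2:ℝ)+(μ.2:ℝ))^2 = (n:ℝ) := h2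
      have hcast : ((v.1:ℝ)) = ((w.1:ℝ)) := by exact_mod_cast congrArg Int.cast hvw
      rw [hcast] at hQ1
      linarith
  · have hneg : (n:ℝ) < 0 := by
      have : n < 0 := lt_of_le_of_ne (not_lt.mp hpos) hn
      exact_mod_cast this
    have habs : |(n:ℝ)| = -(n:ℝ) := abs_of_neg hneg
    have hb := key (fun v : ℤ×ℤ =>
        if Qf ((v.1:ℝ)+(μ.1:ℝ), (v.2:ℝ)+(μ.2:ℝ)) = (n:ℝ) then
          1 - Real.sign (3*((v.1:ℝ)+(μ.1:ℝ)) + ((v.2:ℝ)+(μ.2:ℝ))) *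
              Real.sign (3*((v.1:ℝ)+(μ.1:ℝ)) - ((v.2:ℝ)+(μ.2:ℝ)))
        else 0) (μ.1:ℝ) (μ.2:ℝ) |(n:ℝ)| hNnn ?_ ?_ ?_
    · rw [abs_mul, abs_of_pos (by norm_num : (0:ℝ) < 1/2)]
      linarith
    · intro v
      by_cases h : Qf ((v.1:ℝ)+(μ.1:ℝ), (v.2:ℝ)+(μ.2:ℝ)) = (n:ℝ)
      · simp only [if_pos h]; exact abs_one_sub_mul_sign _ _
      · simp [h]
    · intro v hf
      by_cases h : Qf ((v.1:ℝ)+(μ.1:ℝ), (v.2:ℝ)+(μ.2:ℝ)) = (n:ℝ)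
      swap
      · simp [h] at hf
      replace hf : ¬(1 - Real.sign (3*((v.1:ℝ)+(μ.1:ℝ)) + ((v.2:ℝ)+(μ.2:ℝ))) *
          Real.sign (3*((v.1:ℝ)+(μ.1:ℝ)) - ((v.2:ℝ)+(μ.2:ℝ))) = 0) := by
        simpa [h] using hf
      set x' := (v.1:ℝ)+(μ.1:ℝ) with hx'
      set y' := (v.2:ℝ)+(μ.2:ℝ) with hy'
      have hQ : 12 * x'^2 - 2 * y'^2 = (n:ℝ) := h
      have hy9 : 9*x'^2 ≤ y'^2 := by
        by_contra hc
        push_neg at hc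
        have hprod : 0 < (3*x'+y') * (3*x'-y') := by nlinarith
        have hsprod : Real.sign (3*x'+y') * Real.sign (3*x'-y') = 1 := by
          rcases lt_trichotomy (3*x'+y') 0 with h1|h1|h1
          · have h2 : 3*x'-y' < 0 := by nlinarith
            rw [Real.sign_of_neg h1, Real.sign_of_neg h2]; ring
          · rw [h1, zero_mul] at hprod; exact absurd hprod (lt_irrefl 0)
          · have h2 : 0 < 3*x'-y' := by nlinarith
            rw [Real.sign_of_pos h1, Real.sign_of_pos h2]; ring
        rw [hsprod] at hf
        norm_num at hf
      constructor
      · rw [habs]; nlinarith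
      · rw [habs]; nlinarith
    · intro v w hv hw hvw
      by_cases h1 : Qf ((v.1:ℝ)+(μ.1:ℝ), (v.2:ℝ)+(μ.2:ℝ)) = (n:ℝ)
      swap
      · simp [h1] at hv
      by_cases h2 : Qf ((w.1:ℝ)+(μ.1:ℝ), (w.2:ℝ)+(μ.2:ℝ)) = (n:ℝ)
      swap
      · simp [h2] at hw
      have hQ1 : 12 * ((v.1:ℝ)+(μ.1:ℝ))^2 - 2 * ((v.2:ℝ)+(μ.2:ℝ))^2 = (n:ℝ) := h1
      have hQ2 : 12 * ((w.1:ℝ)+(μ.1:ℝ))^2 - 2 * ((w.2:ℝ)+(μ.2:ℝ))^2 = (n:ℝ) := h2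
      have hcast : ((v.1:ℝ)) = ((w.1:ℝ)) := by exact_mod_cast congrArg Int.cast hvw
      rw [hcast] at hQ1
      linarith

lemma betaQ_cast (j : ℕ) : ((betaQ j : ℚ) : ℝ) = betaR j := by
  rcases j with _|_|j <;> simp [betaQ, betaR] <;> norm_num

lemma abs_help (m : ℤ) (c : ℤ) (h1 : (1:ℤ) ≤ c) (h2 : c ≤ 47) :
    1/48 ≤ |(m:ℝ) + (c:ℝ)/48| := by
  have hne : 48*m + c ≠ 0 := by omega
  have h3 : (1:ℝ) ≤ |((48*m + c : ℤ) : ℝ)| := by exact_mod_cast Int.one_le_abs hne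
  have h4 : (m:ℝ) + (c:ℝ)/48 = ((48*m + c : ℤ) : ℝ)/48 := by push_cast; ring
  rw [h4, abs_div, abs_of_pos (by norm_num : (0:ℝ) < 48)]
  linarith

lemma abs_coset_ge (j : ℕ) (m : ℤ) : 1/48 ≤ |(m:ℝ) + betaR j| := by
  rcases j with _|_|j
  · have := abs_help m 1 (by norm_num) (by norm_num)
    norm_num at this ⊢
    simpa [betaR] using this
  · have := abs_help m 25 (by norm_num) (by norm_num)
    norm_num at this ⊢
    simpa [betaR] using this
  · have := abs_help m 46 (by norm_num) (by norm_num)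
    have h46 : ((46:ℤ):ℝ)/48 = 23/24 := by norm_num
    rw [h46] at this
    simpa [betaR] using this

lemma coset_cast (j : ℕ) (m : ℤ) : (((m:ℚ) + betaQ j : ℚ) : ℝ) = (m:ℝ) + betaR j := by
  push_cast [betaQ_cast]
  ring

lemma coset_ne (j : ℕ) (m : ℤ) : (m:ℚ) + betaQ j ≠ 0 := by
  intro h0
  have h48 := abs_coset_ge j m
  rw [← coset_cast j m, h0] at h48
  norm_num at h48

lemma card_four {α : Type*} [DecidableEq α] (a b c d : α) :
    ({a,b,c,d} : Finset α).card ≤ 4 := by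
  apply le_trans (Finset.card_insert_le _ _)
  apply Nat.succ_le_succ
  apply le_trans (Finset.card_insert_le _ _)
  apply Nat.succ_le_succ
  apply le_trans (Finset.card_insert_le _ _)
  simp

lemma card_Splus (j : ℕ) : (Splus j).card ≤ 4 := by
  rcases j with _|_|j <;> exact card_four _ _ _ _

lemma card_Sminus (j : ℕ) : (Sminus j).card ≤ 4 := by
  rcases j with _|_|j <;> exact card_four _ _ _ _

lemma dInt_bound (j : ℕ) (m : ℤ) :
    |dInt j m| ≤ 8 * (2 * Real.sqrt |(m:ℝ) + betaR j| + 1) := by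
  set n : ℚ := (m:ℚ) + betaQ j with hn
  have hne : n ≠ 0 := coset_ne j m
  set B : ℝ := 2 * (2 * Real.sqrt |(m:ℝ) + betaR j| + 1) with hB
  have hBnn : 0 ≤ B := by positivity
  have haB : ∀ μ : ℚ × ℚ, |aCoef μ n| ≤ B := by
    intro μ
    have := aCoef_bound μ n hne
    rwa [show ((n:ℚ):ℝ) = (m:ℝ) + betaR j from coset_cast j m] at this
  have h1 : |∑ μ ∈ Splus j, aCoef μ n| ≤ 4*B := by
    calc |∑ μ ∈ Splus j, aCoef μ n| ≤ ∑ μ ∈ Splus j, |aCoef μ n| :=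
          Finset.abs_sum_le_sum_abs _ _
      _ ≤ ∑ _μ ∈ Splus j, B := Finset.sum_le_sum (fun μ _ => haB μ)
      _ = (Splus j).card * B := by rw [Finset.sum_const, nsmul_eq_mul]
      _ ≤ 4*B := by
          have hc : ((Splus j).card : ℝ) ≤ 4 := by exact_mod_cast card_Splus j
          nlinarith
  have h2 : |∑ μ ∈ Sminus j, aCoef μ n| ≤ 4*B := by
    calc |∑ μ ∈ Sminus j, aCoef μ n| ≤ ∑ μ ∈ Sminus j, |aCoef μ n| :=
          Finset.abs_sum_le_sum_abs _ _
      _ ≤ ∑ _μ ∈ Sminus j, B := Finset.sum_le_sum (fun μ _ => haB μ)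
      _ = (Sminus j).card * B := by rw [Finset.sum_const, nsmul_eq_mul]
      _ ≤ 4*B := by
          have hc : ((Sminus j).card : ℝ) ≤ 4 := by exact_mod_cast card_Sminus j
          nlinarith
  rw [dInt, dCoef]
  rw [abs_mul, abs_of_pos (by norm_num : (0:ℝ) < 1/2)]
  have h4 : |(∑ μ ∈ Splus j, aCoef μ n) - ∑ μ ∈ Sminus j, aCoef μ n| ≤ 8*B := by
    calc |(∑ μ ∈ Splus j, aCoef μ n) - ∑ μ ∈ Sminus j, aCoef μ n| ≤
        |∑ μ ∈ Splus j, aCoef μ n| + |∑ μ ∈ Sminus j, aCoef μ n| := abs_sub _ _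
      _ ≤ 8*B := by linarith
  have hBval : B = 2 * (2 * Real.sqrt |(m:ℝ) + betaR j| + 1) := hB
  linarith

/-- Corollary A.3: `d_j(n) ≪ √|n|`. -/
theorem statement19 :
    ∃ C : ℝ, 0 < C ∧ ∀ j : ℕ, j < 3 → ∀ m : ℤ,
      |dInt j m| ≤ C * Real.sqrt |(m : ℝ) + betaR j| := by
  refine ⟨72, by norm_num, ?_⟩
  intro j _hj m
  have h := dInt_bound j m
  have h48 := abs_coset_ge j m
  have hnn : (0:ℝ) ≤ |(m:ℝ) + betaR j| := abs_nonneg _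
  set s := Real.sqrt |(m:ℝ) + betaR j| with hs
  have hsnn : 0 ≤ s := Real.sqrt_nonneg _
  have hsq : s^2 = |(m:ℝ) + betaR j| := Real.sq_sqrt hnn
  have hs7 : (1:ℝ)/7 ≤ s := by nlinarith
  linarith


end Paper
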